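/- Let X ⊆ Y be an inclusion of simplicial sets, let y be a vertex of X which is narrow in Y, and let k ≥ 1. Let N_k be the set of nondegenerate k-simplices of Y which have y as a vertex and do not belong to X, and for σ ∈ N_k let i_σ (0 ≤ i_σ ≤ k) be the unique index such that the i_σ-th vertex of σ is y. Then the inclusion Y ∪ W_y(X) ∪ W_y(sk_{k−1} Y) ↪ Y ∪ W_y(X) ∪ W_y(sk_k Y) (subcomplexes of J × Y, with Y identified with {0} × Y) is a pushout of the coproduct over σ ∈ N_k of the iso-horn inclusions 𝕍_{i_σ}[k+1] ↪ ∇̄_{i_σ}[k+1]. -/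

import Mathlib

open CategoryTheory Simplicial Opposite Limits

namespace Paper

/-! ## The simplicial set `J`, nerve of the free-living isomorphism -/

/-- The simplicial set `J`, the nerve of the free-living isomorphism `𝕀`:
its `n`-simplices are the tuples `{0,1}^(n+1)` (recorded as `Bool`-valued functions,
`false` being the vertex `0` and `true` the vertex `1`), with all simplicial
operators acting by reindexing. -/
def J : SSet.{0} where
  obj m := Fin (m.unop.len + 1) → Bool
  map f := TypeCat.ofHom fun a => a ∘ f.unop.toOrderHom
  map_id _ := rfl
  map_comp _ _ := rfl

/-- The two vertices `0, 1 : Δ[0] ⟶ J` of `J`; `ptJ false` is the vertex `0` and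
`ptJ true` is the vertex `1`. -/
def ptJ (b : Bool) : Δ[0] ⟶ J where
  app _ := TypeCat.ofHom fun _ => fun _ => b
  naturality _ _ _ := rfl

/-- The boundary `∂J = {0} ∪ {1}` of `J` (two discrete points). -/
def bJ : SSet.{0} where
  obj _ := Bool
  map _ := TypeCat.ofHom fun b => b
  map_id _ := rfl
  map_comp _ _ := rfl

/-- The inclusion `∂J ↪ J`. -/
def bJIncl : bJ ⟶ J where
  app _ := TypeCat.ofHom fun b => fun _ => b
  naturality _ _ _ := rfl

/-! ## Binary products and pushout-products -/

/-- The (pointwise) product of two simplicial sets. -/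
def sprod (X Y : SSet.{0}) : SSet.{0} where
  obj m := X.obj m × Y.obj m
  map f := TypeCat.ofHom fun p => (X.map f p.1, Y.map f p.2)
  map_id m := by
    ext p : 3
    exact Prod.ext (FunctorToTypes.map_id_apply X p.1) (FunctorToTypes.map_id_apply Y p.2)
  map_comp f g := by
    ext p : 3
    exact Prod.ext (FunctorToTypes.map_comp_apply X f g p.1)
      (FunctorToTypes.map_comp_apply Y f g p.2)

/-- The product of two morphisms of simplicial sets. -/
def sprodMap {X X' Y Y' : SSet.{0}} (f : X ⟶ X') (g : Y ⟶ Y') : sprod X Y ⟶ sprod X' Y' where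
  app m := TypeCat.ofHom fun p => (f.app m p.1, g.app m p.2)
  naturality m m' φ := by
    ext p : 3
    have h1 := ConcreteCategory.congr_hom (f.naturality φ) p.1
    have h2 := ConcreteCategory.congr_hom (g.naturality φ) p.2
    exact Prod.ext h1 h2

/-- The pushout-product `f □ g : (A × Z) ∪ (B × W) ⟶ B × Z` of `f : A ⟶ B` and
`g : W ⟶ Z`, the domain being presented as the pushout `(A × Z) ∪_{A × W} (B × W)`. -/
noncomputable def pp {A B W Z : SSet.{0}} (f : A ⟶ B) (g : W ⟶ Z) :
    pushout (sprodMap (𝟙 A) g) (sprodMap f (𝟙 W)) ⟶ sprod B Z :=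
  pushout.desc (sprodMap f (𝟙 Z)) (sprodMap (𝟙 B) g) rfl

/-! ## Saturated classes of morphisms -/

/-- A class of morphisms is stable under retracts if, whenever `f` is a retract of `g`
in the arrow category, membership of `g` implies membership of `f`. -/
def StableUnderRetracts (T : MorphismProperty SSet.{0}) : Prop :=
  ∀ ⦃X Y X' Y' : SSet.{0}⦄ (f : X ⟶ Y) (g : X' ⟶ Y')
    (i : Arrow.mk f ⟶ Arrow.mk g) (r : Arrow.mk g ⟶ Arrow.mk f),
    i ≫ r = 𝟙 _ → T g → T f

/-- The inclusion functor `Set.Iio i ⥤ ι`. -/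
def iioFunctor {ι : Type} [Preorder ι] (i : ι) : Set.Iio i ⥤ ι :=
  Monotone.functor (f := Subtype.val) (fun _ _ h => h)

/-- The cocone on the restriction of `F : ι ⥤ SSet` to `Set.Iio i` with apex `F.obj i`. -/
def restrictionCocone {ι : Type} [Preorder ι] (F : ι ⥤ SSet.{0}) (i : ι) :
    Cocone (iioFunctor i ⋙ F) where
  pt := F.obj i
  ι :=
    { app := fun j => F.map (homOfLE j.2.le)
      naturality := fun j k h => by
        dsimp [iioFunctor]
        rw [← F.map_comp, Category.comp_id]
        congr 1 }

/-- A class of morphisms is stable under transfinite composition if, for every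
well-ordered type `ι` and every functor `F : ι ⥤ SSet` which is continuous at limit
stages and whose successor maps `F.obj i ⟶ F.obj (i+1)` all belong to the class, and
every colimit cocone `c` on `F`, the transfinite composite `F.obj ⊥ ⟶ c.pt` belongs to
the class. -/
def StableUnderTransfiniteComposition (T : MorphismProperty SSet.{0}) : Prop :=
  ∀ (ι : Type) [LinearOrder ι] [SuccOrder ι] [OrderBot ι] [WellFoundedLT ι]
    (F : ι ⥤ SSet.{0}),
    (∀ i : ι, ¬IsMax i → T (F.map (homOfLE (Order.le_succ i)))) →
    (∀ i : ι, Order.IsSuccLimit i → Nonempty (IsColimit (restrictionCocone F i))) →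
    ∀ (c : Cocone F), IsColimit c → T (c.ι.app ⊥)

/-- A class of morphisms of simplicial sets is saturated if it is closed under
isomorphisms, pushouts, transfinite compositions, and retracts. -/
structure IsSaturated (T : MorphismProperty SSet.{0}) : Prop where
  respectsIso : T.RespectsIso
  stableUnderCobaseChange : T.IsStableUnderCobaseChange
  stableUnderRetracts : StableUnderRetracts T
  stableUnderTransfiniteComposition : StableUnderTransfiniteComposition T

/-- The saturated closure of a class of morphisms: the smallest saturated class
containing it. -/
def satClosure (S : MorphismProperty SSet.{0}) : MorphismProperty SSet.{0} :=
  fun _ _ f => ∀ T : MorphismProperty SSet.{0}, IsSaturated T → S ≤ T → T f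

/-! ## Subcomplexes -/

/-- A subcomplex of a simplicial set. -/
structure Sub (X : SSet.{0}) where
  carrier : ∀ m, Set (X.obj m)
  map_mem : ∀ ⦃m m' : SimplexCategoryᵒᵖ⦄ (f : m ⟶ m') ⦃σ : X.obj m⦄,
    σ ∈ carrier m → X.map f σ ∈ carrier m'

/-- The simplicial set underlying a subcomplex. -/
def Sub.toSSet {X : SSet.{0}} (S : Sub X) : SSet.{0} where
  obj m := S.carrier m
  map f := TypeCat.ofHom fun σ => ⟨X.map f σ.1, S.map_mem f σ.2⟩
  map_id m := by
    ext σ : 3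
    exact Subtype.ext (FunctorToTypes.map_id_apply X σ.1)
  map_comp f g := by
    ext σ : 3
    exact Subtype.ext (FunctorToTypes.map_comp_apply X f g σ.1)

/-- The inclusion of a subcomplex. -/
def Sub.ι {X : SSet.{0}} (S : Sub X) : S.toSSet ⟶ X where
  app _ := TypeCat.ofHom fun σ => σ.1
  naturality _ _ _ := rfl

/-- Containment of subcomplexes. -/
def Sub.Le {X : SSet.{0}} (S T : Sub X) : Prop := ∀ m, S.carrier m ⊆ T.carrier m

/-- The inclusion map associated to a containment of subcomplexes. -/
def Sub.homOfLe {X : SSet.{0}} {S T : Sub X} (h : S.Le T) : S.toSSet ⟶ T.toSSet where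
  app m := TypeCat.ofHom fun σ => ⟨σ.1, h m σ.2⟩
  naturality _ _ _ := rfl

/-- The union of two subcomplexes. -/
def Sub.union {X : SSet.{0}} (S T : Sub X) : Sub X where
  carrier m := S.carrier m ∪ T.carrier m
  map_mem _ _ f _ h := h.imp (fun hs => S.map_mem f hs) (fun ht => T.map_mem f ht)

/-- The intersection of two subcomplexes. -/
def Sub.inter {X : SSet.{0}} (S T : Sub X) : Sub X where
  carrier m := S.carrier m ∩ T.carrier m
  map_mem _ _ f _ h := ⟨S.map_mem f h.1, T.map_mem f h.2⟩

/-- A subcomplex `S` of `X`, viewed as a subcomplex of (the simplicial set underlying)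
another subcomplex `T` of `X`. -/
def Sub.restrict {X : SSet.{0}} (T S : Sub X) : Sub T.toSSet where
  carrier m := {σ | σ.1 ∈ S.carrier m}
  map_mem _ _ f _ h := S.map_mem f h

/-- The (dimension zero) object of `SimplexCategoryᵒᵖ` indexing vertices. -/
abbrev V0 : SimplexCategoryᵒᵖ := Opposite.op (SimplexCategory.mk 0)

/-- The full subcomplex of `X` on a set `ν` of vertices: the simplices all of whose
vertices lie in `ν`. -/
def fullSub (X : SSet.{0}) (ν : Set (X.obj V0)) : Sub X where
  carrier m := {σ | ∀ g : SimplexCategory.mk 0 ⟶ m.unop, X.map g.op σ ∈ ν}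
  map_mem := by
    intro m m' f σ hσ g
    rw [← FunctorToTypes.map_comp_apply]
    exact hσ (g ≫ f.unop)

/-! ## Widenings and widened inclusions -/

/-- The widening `W_ν(X)` of `X` at a set `ν` of vertices: the full subcomplex of
`J × X` on the vertex set `({0} × X₀) ∪ ({1} × ν)`. -/
def wideSub (X : SSet.{0}) (ν : Set (X.obj V0)) : Sub (sprod J X) :=
  fullSub (sprod J X) {p | p.1 0 = true → p.2 ∈ ν}

/-- The subcomplex `{0} × X` of `J × X` (the full subcomplex on the vertices
`{0} × X₀`). -/
def zeroSlice (X : SSet.{0}) : Sub (sprod J X) :=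
  fullSub (sprod J X) {p | p.1 0 = false}

/-- For `A` a subcomplex of `Y`, the subcomplex `J × A` of `J × Y`. -/
def Sub.prodJ {Y : SSet.{0}} (A : Sub Y) : Sub (sprod J Y) where
  carrier m := {p | p.2 ∈ A.carrier m}
  map_mem _ _ f _ h := A.map_mem f h

/-- Given a subcomplex (inclusion) `A = X ⊆ Y` and a set `ν` of vertices of `Y`, the
subcomplex `({0} × Y) ∪ W_{ν ∩ X₀}(X)` of `J × Y`: the domain of the inclusion
`X ↪ Y` widened at `ν`. -/
def widenedSub (Y : SSet.{0}) (A : Sub Y) (ν : Set (Y.obj V0)) : Sub (sprod J Y) :=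
  (zeroSlice Y).union ((wideSub Y (ν ∩ A.carrier V0)).inter A.prodJ)

lemma zeroSlice_le_wideSub (Y : SSet.{0}) (ν : Set (Y.obj V0)) :
    (zeroSlice Y).Le (wideSub Y ν) := by
  intro m σ hσ g h
  exact absurd (hσ g) (by simp [h])

lemma wideSub_mono (Y : SSet.{0}) {ν ν' : Set (Y.obj V0)} (h : ν ⊆ ν') :
    (wideSub Y ν).Le (wideSub Y ν') :=
  fun _ σ hσ g ht => h (hσ g ht)

lemma widenedSub_le (Y : SSet.{0}) (A : Sub Y) (ν : Set (Y.obj V0)) :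
    (widenedSub Y A ν).Le (wideSub Y ν) := by
  refine fun m σ hσ => Or.elim hσ (fun h => ?_) (fun h => ?_)
  · exact zeroSlice_le_wideSub Y ν m h
  · exact wideSub_mono Y Set.inter_subset_left m h.1

/-- The inclusion `X ↪ Y` widened at `ν`: the inclusion
`({0} × Y) ∪ W_{ν ∩ X₀}(X) ↪ W_ν(Y)`. -/
def widenedIncl (Y : SSet.{0}) (A : Sub Y) (ν : Set (Y.obj V0)) :
    (widenedSub Y A ν).toSSet ⟶ (wideSub Y ν).toSSet :=
  Sub.homOfLe (widenedSub_le Y A ν)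

/-- `Wide`: the class of all widened inclusions. -/
def Wide : MorphismProperty SSet.{0} := fun _ _ h =>
  ∃ (Y : SSet.{0}) (A : Sub Y) (ν : Set (Y.obj V0)),
    Arrow.mk h = Arrow.mk (widenedIncl Y A ν)

/-- `Wide^(1)`: the class of inclusions widened at a single vertex. -/
def Wide1 : MorphismProperty SSet.{0} := fun _ _ h =>
  ∃ (Y : SSet.{0}) (A : Sub Y) (v : Y.obj V0),
    Arrow.mk h = Arrow.mk (widenedIncl Y A {v})

/-! ## Narrow vertices -/

/-- A vertex `v` of `Y` is narrow if every simplex of `Y` has at most one vertex equal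
to `v`. -/
def Narrow (Y : SSet.{0}) (v : Y.obj V0) : Prop :=
  ∀ ⦃m : SimplexCategoryᵒᵖ⦄ (σ : Y.obj m) (g g' : SimplexCategory.mk 0 ⟶ m.unop),
    Y.map g.op σ = v → Y.map g'.op σ = v → g = g'

/-- `Wide_nar`: the class of inclusions widened at a narrow set of vertices. -/
def WideNar : MorphismProperty SSet.{0} := fun _ _ h =>
  ∃ (Y : SSet.{0}) (A : Sub Y) (ν : Set (Y.obj V0)),
    (∀ v ∈ ν, Narrow Y v) ∧ Arrow.mk h = Arrow.mk (widenedIncl Y A ν)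

/-- `Wide_nar^(1)`: the class of inclusions widened at a single narrow vertex. -/
def WideNar1 : MorphismProperty SSet.{0} := fun _ _ h =>
  ∃ (Y : SSet.{0}) (A : Sub Y) (v : Y.obj V0),
    Narrow Y v ∧ Arrow.mk h = Arrow.mk (widenedIncl Y A {v})

/-! ## Standard simplices, boundaries, skeleta, iso-horns -/

/-- The unique map to the terminal simplicial set `Δ[0]`. -/
def toPt (X : SSet.{0}) : X ⟶ Δ[0] where
  app m := TypeCat.ofHom fun _ => SSet.stdSimplex.const 0 0 m
  naturality m m' f := by
    ext x : 3
    apply SSet.stdSimplex.objEquiv.injective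
    apply SimplexCategory.Hom.ext
    apply OrderHom.ext
    funext j
    exact Subsingleton.elim (α := Fin 1) _ _

/-- The `i`-th vertex of the standard simplex `Δ[n]`. -/
def vrt (n : ℕ) (i : Fin (n + 1)) : Δ[n].obj V0 :=
  SSet.stdSimplex.const n i V0

/-- The boundary `∂Δ[n]`, as a subcomplex of `Δ[n]`: the simplices which are not
surjective as monotone maps. -/
def bSub (n : ℕ) : Sub Δ[n] where
  carrier m := {σ | ¬Function.Surjective (SSet.stdSimplex.asOrderHom σ)}
  map_mem _ _ f σ hσ h := hσ (Function.Surjective.of_comp h)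

/-- The `k`-skeleton of `Y`, as a subcomplex: the simplices which factor through some
simplex of dimension at most `k`. -/
def skSub (Y : SSet.{0}) (k : ℕ) : Sub Y where
  carrier m := {σ | ∃ (j : ℕ) (_ : j ≤ k) (f : m.unop ⟶ SimplexCategory.mk j)
    (τ : Y.obj (Opposite.op (SimplexCategory.mk j))), Y.map f.op τ = σ}
  map_mem := by
    rintro m m' φ σ ⟨j, hj, f, τ, rfl⟩
    exact ⟨j, hj, φ.unop ≫ f, τ, by rw [← FunctorToTypes.map_comp_apply]; rfl⟩

/-- A `k`-simplex is nondegenerate if it admits no factorization through a simplex of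
strictly smaller dimension. -/
def Nondegenerate (Y : SSet.{0}) {k : ℕ} (σ : Y.obj (Opposite.op (SimplexCategory.mk k))) :
    Prop :=
  ∀ (j : ℕ) (f : SimplexCategory.mk k ⟶ SimplexCategory.mk j)
    (τ : Y.obj (Opposite.op (SimplexCategory.mk j))), Y.map f.op τ = σ → k ≤ j

/-- The iso-horn inclusion `𝕍_i[m+1] ↪ ∇̄_i[m+1]`: the boundary inclusion
`∂Δ[m] ↪ Δ[m]` widened at the single vertex `i`, i.e. the inclusion
`({0} × Δ[m]) ∪ W_i(∂Δ[m]) ↪ W_i(Δ[m])` of the iso-horn into the isoplex. -/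
def isoHornIncl (m : ℕ) (i : Fin (m + 1)) :
    (widenedSub Δ[m] (bSub m) {vrt m i}).toSSet ⟶ (wideSub Δ[m] {vrt m i}).toSSet :=
  widenedIncl Δ[m] (bSub m) {vrt m i}

/-- `IsoHorn`: the class of all iso-horn inclusions. -/
def IsoHorn : MorphismProperty SSet.{0} := fun _ _ h =>
  ∃ (m : ℕ) (i : Fin (m + 1)), Arrow.mk h = Arrow.mk (isoHornIncl m i)

/-! ## The classes `({0} ↪ J) □ Bdry` and `({0} ↪ J) □ Mono` -/

/-- The class `({0} ↪ J) □ Bdry` of pushout-products of the vertex `0 : Δ[0] ⟶ J`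
with the boundary inclusions `∂Δ[n] ↪ Δ[n]`. -/
def ppJ0Bdry : MorphismProperty SSet.{0} := fun _ _ h =>
  ∃ n : ℕ, Arrow.mk h = Arrow.mk (pp (ptJ false) (SSet.boundary n).ι)

/-- The class `({0} ↪ J) □ Mono` of pushout-products of the vertex `0 : Δ[0] ⟶ J`
with all monomorphisms of simplicial sets. -/
def ppJ0Mono : MorphismProperty SSet.{0} := fun _ _ h =>
  ∃ (W Z : SSet.{0}) (g : W ⟶ Z), Mono g ∧ Arrow.mk h = Arrow.mk (pp (ptJ false) g)


/-- The set `N_k` of nondegenerate `k`-simplices of `Y` which have `y` as a vertex and do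
not belong to the subcomplex `A`. -/
def Nk (Y : SSet.{0}) (A : Sub Y) (y : Y.obj V0) (k : ℕ) : Type :=
  {σ : Y.obj (Opposite.op (SimplexCategory.mk k)) //
    Nondegenerate Y σ ∧ σ ∉ A.carrier (Opposite.op (SimplexCategory.mk k)) ∧
      ∃ g : SimplexCategory.mk 0 ⟶ SimplexCategory.mk k, Y.map g.op σ = y}

/-- The subcomplex `Y ∪ W_y(X) ∪ W_y(sk_j Y)` of `J × Y` (with `Y` identified with
`{0} × Y`). -/
def filtSub (Y : SSet.{0}) (A : Sub Y) (y : Y.obj V0) (j : ℕ) : Sub (sprod J Y) :=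
  ((zeroSlice Y).union ((wideSub Y {y}).inter A.prodJ)).union
    ((wideSub Y {y}).inter (skSub Y j).prodJ)



/-- Pushout criterion in `Type`. -/
noncomputable def typesPushout {A B C D : Type} (t : A ⟶ B) (l : A ⟶ C) (r : B ⟶ D) (b : C ⟶ D)
    (comm : t ≫ r = l ≫ b) (hr : Function.Injective r)
    (hsurj : ∀ d, (∃ x, r x = d) ∨ (∃ c, b c = d))
    (h5 : ∀ c x, b c = r x → ∃ a, l a = c)
    (h6 : ∀ c c', b c = b c' → c = c' ∨ ∃ a, l a = c) :
    IsColimit (PushoutCocone.mk r b comm) := by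
  classical
  have key : ∀ (s : PushoutCocone t l) (x : B) (c : C), r x = b c → s.inl x = s.inr c := by
    intro s x c h
    obtain ⟨a, rfl⟩ := h5 c x h.symm
    have hbc : b (l a) = r (t a) := (ConcreteCategory.congr_hom comm a).symm
    have hx : x = t a := hr (h.trans hbc)
    subst hx
    exact ConcreteCategory.congr_hom s.condition a
  have key2 : ∀ (s : PushoutCocone t l) (c c' : C), b c = b c' → s.inr c = s.inr c' := by
    intro s c c' h
    rcases h6 c c' h with rfl | ⟨a, rfl⟩
    · rfl
    have hbc : b (l a) = r (t a) := (ConcreteCategory.congr_hom comm a).symm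
    have h1 : s.inl (t a) = s.inr (l a) := (ConcreteCategory.congr_hom s.condition a)
    have h2 : s.inl (t a) = s.inr c' := key s _ _ (hbc.symm.trans h)
    exact h1.symm.trans h2
  refine PushoutCocone.IsColimit.mk _ (fun s => TypeCat.ofHom fun d =>
    if h : ∃ x, r x = d then s.inl h.choose
    else s.inr ((hsurj d).resolve_left h).choose) ?_ ?_ ?_
  · intro s
    ext x
    have h : ∃ x', r x' = r x := ⟨x, rfl⟩
    simp only [TypeCat.Fun.toFun_apply, types_comp_apply, TypeCat.ofHom_apply, dif_pos h]
    exact congrArg s.inl (hr h.choose_spec)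
  · intro s
    ext c
    simp only [TypeCat.Fun.toFun_apply, types_comp_apply, TypeCat.ofHom_apply]
    by_cases h : ∃ x, r x = b c
    · rw [dif_pos h]
      exact key s _ _ (h.choose_spec.trans rfl)
    · rw [dif_neg h]
      exact key2 s _ _ ((hsurj (b c)).resolve_left h).choose_spec
  · intro s m h1 h2
    ext d
    simp only [TypeCat.Fun.toFun_apply, TypeCat.ofHom_apply]
    by_cases h : ∃ x, r x = d
    · rw [dif_pos h]
      conv_lhs => rw [← h.choose_spec]
      exact ConcreteCategory.congr_hom h1 h.choose
    · rw [dif_neg h]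
      have hc := ((hsurj d).resolve_left h).choose_spec
      conv_lhs => rw [← hc]
      exact ConcreteCategory.congr_hom h2 _

/-- A monotone surjection `Fin (n+1) → Fin (n+1)` is the identity. -/
lemma orderHom_surj_id {n : ℕ} (f : Fin (n + 1) →o Fin (n + 1))
    (hf : Function.Surjective f) : ∀ i, f i = i := by
  have hinj : Function.Injective f := (Finite.injective_iff_surjective).2 hf
  have hsm : StrictMono f := f.monotone.strictMono_of_injective hinj
  have : (f : Fin (n+1) → Fin (n+1)) = id := by
    refine (StrictMono.range_inj hsm strictMono_id).1 ?_
    rw [Set.range_id]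
    exact Set.range_eq_univ.2 hf
  intro i
  exact congrFun this i



open SimplexCategory in
/-- Epi-mono factorization in `SimplexCategory` with explicit `mk` objects. -/
lemma factorSurj {x : SimplexCategory} {b : ℕ} (f : x ⟶ SimplexCategory.mk b) :
    ∃ (j : ℕ) (e : x ⟶ SimplexCategory.mk j) (i : SimplexCategory.mk j ⟶ SimplexCategory.mk b),
      j ≤ x.len ∧ j ≤ b ∧ Function.Surjective e.toOrderHom ∧
      Function.Injective i.toOrderHom ∧ e ≫ i = f := by
  have hmk : SimplexCategory.mk (Limits.image f).len = Limits.image f :=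
    SimplexCategory.mk_len _
  refine ⟨(Limits.image f).len, Limits.factorThruImage f ≫ eqToHom hmk.symm,
    eqToHom hmk ≫ Limits.image.ι f, ?_, ?_, ?_, ?_, ?_⟩
  · have : Epi (Limits.factorThruImage f ≫ eqToHom hmk.symm) := epi_comp _ _
    simpa using SimplexCategory.len_le_of_epi (Limits.factorThruImage f ≫ eqToHom hmk.symm)
  · have : Mono (eqToHom hmk ≫ Limits.image.ι f) := mono_comp _ _
    simpa using SimplexCategory.len_le_of_mono (eqToHom hmk ≫ Limits.image.ι f)
  · rw [← SimplexCategory.epi_iff_surjective]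
    exact epi_comp _ _
  · rw [← SimplexCategory.mono_iff_injective]
    exact mono_comp _ _
  · simp

/-- If moreover `f` is not surjective, the image has dimension `< b`. -/
lemma factorSurj_lt {x : SimplexCategory} {b : ℕ} (f : x ⟶ SimplexCategory.mk b)
    (hf : ¬ Function.Surjective f.toOrderHom) :
    ∃ (j : ℕ) (e : x ⟶ SimplexCategory.mk j) (i : SimplexCategory.mk j ⟶ SimplexCategory.mk b),
      j < b ∧ Function.Surjective e.toOrderHom ∧ e ≫ i = f := by
  obtain ⟨j, e, i, _, hjb, hes, hii, hei⟩ := factorSurj f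
  refine ⟨j, e, i, lt_of_le_of_ne hjb ?_, hes, hei⟩
  rintro rfl
  apply hf
  have hisurj : Function.Surjective i.toOrderHom :=
    Finite.injective_iff_surjective.1 hii
  have : f.toOrderHom = i.toOrderHom.comp e.toOrderHom := by
    rw [← hei]; rfl
  rw [this]
  exact hisurj.comp hes

/-- Minimal and maximal monotone sections of a surjection in `SimplexCategory`. -/
lemma exists_sections {x : SimplexCategory} {b : ℕ} (f : x ⟶ SimplexCategory.mk b)
    (hf : Function.Surjective f.toOrderHom) :
    ∃ smin smax : SimplexCategory.mk b ⟶ x, smin ≫ f = 𝟙 _ ∧ smax ≫ f = 𝟙 _ ∧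
      ∀ z : Fin (x.len + 1), smin.toOrderHom (f.toOrderHom z) ≤ z ∧
        z ≤ smax.toOrderHom (f.toOrderHom z) := by
  classical
  have hne : ∀ j : Fin (b + 1), (Finset.univ.filter (fun z => f.toOrderHom z = j)).Nonempty := by
    intro j
    obtain ⟨z, hz⟩ := hf j
    exact ⟨z, Finset.mem_filter.2 ⟨Finset.mem_univ z, hz⟩⟩
  set S : Fin (b + 1) → Finset (Fin (x.len + 1)) :=
    fun j => Finset.univ.filter (fun z => f.toOrderHom z = j) with hS
  have hmemS : ∀ j z, z ∈ S j ↔ f.toOrderHom z = j := by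
    intro j z; simp [hS]
  have hminmem : ∀ j, f.toOrderHom ((S j).min' (hne j)) = j :=
    fun j => (hmemS j _).1 ((S j).min'_mem (hne j))
  have hmaxmem : ∀ j, f.toOrderHom ((S j).max' (hne j)) = j :=
    fun j => (hmemS j _).1 ((S j).max'_mem (hne j))
  have hminmono : Monotone (fun j => (S j).min' (hne j)) := by
    intro j j' hjj'
    by_contra hlt
    push_neg at hlt
    have h1 : j' ≤ j := by
      have := f.toOrderHom.monotone hlt.le
      rw [hminmem, hminmem] at this
      exact this
    have hjj : j = j' := le_antisymm hjj' h1
    subst hjj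
    exact absurd rfl hlt.ne'
  have hmaxmono : Monotone (fun j => (S j).max' (hne j)) := by
    intro j j' hjj'
    by_contra hlt
    push_neg at hlt
    have h1 : j' ≤ j := by
      have := f.toOrderHom.monotone hlt.le
      rw [hmaxmem, hmaxmem] at this
      exact this
    have hjj : j = j' := le_antisymm hjj' h1
    subst hjj
    exact absurd rfl hlt.ne'
  refine ⟨SimplexCategory.Hom.mk ⟨fun j => (S j).min' (hne j), hminmono⟩,
    SimplexCategory.Hom.mk ⟨fun j => (S j).max' (hne j), hmaxmono⟩, ?_, ?_, ?_⟩
  · apply SimplexCategory.Hom.ext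
    apply OrderHom.ext
    funext j
    exact hminmem j
  · apply SimplexCategory.Hom.ext
    apply OrderHom.ext
    funext j
    exact hmaxmem j
  · intro z
    constructor
    · exact (S _).min'_le z ((hmemS _ z).2 rfl)
    · exact (S _).le_max' z ((hmemS _ z).2 rfl)


/-- Eilenberg–Zilber, existence: a simplex in `sk_k` but not `sk_{k-1}` has a surjective
presentation by a nondegenerate `k`-simplex. -/
lemma ez_exists {Y : SSet.{0}} {m : SimplexCategoryᵒᵖ} {k : ℕ} (hk : 1 ≤ k) (τ : Y.obj m)
    (hτ : τ ∈ (skSub Y k).carrier m) (hτ' : τ ∉ (skSub Y (k - 1)).carrier m) :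
    ∃ (f : m.unop ⟶ SimplexCategory.mk k) (σ : Y.obj (Opposite.op (SimplexCategory.mk k))),
      Function.Surjective f.toOrderHom ∧ Nondegenerate Y σ ∧ Y.map f.op σ = τ := by
  classical
  set P : ℕ → Prop := fun j => ∃ (f : m.unop ⟶ SimplexCategory.mk j)
    (σ : Y.obj (Opposite.op (SimplexCategory.mk j))),
      Function.Surjective f.toOrderHom ∧ Y.map f.op σ = τ with hP
  obtain ⟨j0, hj0, f0, τ0, hfτ0⟩ := hτ
  obtain ⟨j1, e, i, _, hj1, hes, _, hei⟩ := factorSurj f0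
  have hex : ∃ j, P j := by
    refine ⟨j1, e, Y.map i.op τ0, hes, ?_⟩
    rw [← FunctorToTypes.map_comp_apply, ← op_comp, hei, hfτ0]
  have hfind := Nat.find_spec hex
  have hkeq : Nat.find hex = k := by
    have h1 : Nat.find hex ≤ k := le_trans (Nat.find_min' hex (by
        refine ⟨e, Y.map i.op τ0, hes, ?_⟩
        rw [← FunctorToTypes.map_comp_apply, ← op_comp, hei, hfτ0])) (le_trans hj1 hj0)
    have h2 : ¬ Nat.find hex ≤ k - 1 := by
      intro hle
      obtain ⟨f, σ, _, hfs⟩ := hfind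
      exact hτ' ⟨Nat.find hex, hle, f, σ, hfs⟩
    omega
  have hmin : ∀ j, j < k → ¬ P j := by
    intro j hj
    exact Nat.find_min hex (by omega)
  have hPk : P k := hkeq ▸ hfind
  obtain ⟨f, σ, hfs, hfτ⟩ := hPk
  refine ⟨f, σ, hfs, ?_, hfτ⟩
  intro j' g ρ hσρ
  by_contra hlt
  push_neg at hlt
  have hτρ : Y.map (f ≫ g).op ρ = τ := by
    rw [op_comp, FunctorToTypes.map_comp_apply, hσρ, hfτ]
  obtain ⟨j'', e', i', _, hj''le, hes', _, hei'⟩ := factorSurj (f ≫ g)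
  refine hmin j'' (by omega) ⟨e', Y.map i'.op ρ, hes', ?_⟩
  rw [← FunctorToTypes.map_comp_apply, ← op_comp, hei', hτρ]

/-- Eilenberg–Zilber, uniqueness. -/
lemma ez_unique {Y : SSet.{0}} {m : SimplexCategoryᵒᵖ} {k : ℕ}
    (f f' : m.unop ⟶ SimplexCategory.mk k)
    (σ σ' : Y.obj (Opposite.op (SimplexCategory.mk k)))
    (hf : Function.Surjective f.toOrderHom) (hf' : Function.Surjective f'.toOrderHom)
    (hσ : Nondegenerate Y σ) (hσ' : Nondegenerate Y σ')
    (h : Y.map f.op σ = Y.map f'.op σ') : f = f' ∧ σ = σ' := by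
  have claim : ∀ s : SimplexCategory.mk k ⟶ m.unop, s ≫ f' = 𝟙 _ →
      s ≫ f = 𝟙 _ ∧ σ' = σ := by
    intro s hs
    have hσ's : σ' = Y.map (s ≫ f).op σ := by
      have h1 : σ' = Y.map (s ≫ f').op σ' := by
        rw [hs]; simp
      rw [op_comp, FunctorToTypes.map_comp_apply] at h1
      rw [op_comp, FunctorToTypes.map_comp_apply, h]
      exact h1
    have hsurj : Function.Surjective (s ≫ f).toOrderHom := by
      by_contra hns
      obtain ⟨j, e, i, hjk, hes, hei⟩ := factorSurj_lt (s ≫ f) hns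
      have : σ' = Y.map e.op (Y.map i.op σ) := by
        rw [← FunctorToTypes.map_comp_apply, ← op_comp, hei, hσ's]
      exact absurd (hσ' j e (Y.map i.op σ) this.symm) (by omega)
    have hid : s ≫ f = 𝟙 _ := by
      apply SimplexCategory.Hom.ext
      apply OrderHom.ext
      funext j
      exact orderHom_surj_id (s ≫ f).toOrderHom hsurj j
    refine ⟨hid, ?_⟩
    rw [hσ's, hid]
    simp
  obtain ⟨smin, smax, hsmin, hsmax, hbetween⟩ := exists_sections f' hf'
  obtain ⟨hminid, hσσ'⟩ := claim smin hsmin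
  obtain ⟨hmaxid, -⟩ := claim smax hsmax
  refine ⟨?_, hσσ'.symm⟩
  apply SimplexCategory.Hom.ext
  apply OrderHom.ext
  funext z
  obtain ⟨hle1, hle2⟩ := hbetween z
  have e1 : f.toOrderHom (smin.toOrderHom (f'.toOrderHom z)) = f'.toOrderHom z := by
    have := congrArg (fun q => SimplexCategory.Hom.toOrderHom q (f'.toOrderHom z)) hminid
    exact this
  have e2 : f.toOrderHom (smax.toOrderHom (f'.toOrderHom z)) = f'.toOrderHom z := by
    have := congrArg (fun q => SimplexCategory.Hom.toOrderHom q (f'.toOrderHom z)) hmaxid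
    exact this
  have l1 : f'.toOrderHom z ≤ f.toOrderHom z := e1 ▸ f.toOrderHom.monotone hle1
  have l2 : f.toOrderHom z ≤ f'.toOrderHom z := e2 ▸ f.toOrderHom.monotone hle2
  exact le_antisymm l2 l1


/-- The Yoneda map `Δ[n] ⟶ Y` classified by an `n`-simplex `σ` of `Y`. -/
def yonY (Y : SSet.{0}) {n : ℕ} (σ : Y.obj (Opposite.op (SimplexCategory.mk n))) :
    Δ[n] ⟶ Y where
  app m := TypeCat.ofHom fun x => Y.map (SSet.stdSimplex.objEquiv x).op σ
  naturality m m' φ := by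
    ext x : 3
    show Y.map (SSet.stdSimplex.objEquiv (Δ[n].map φ x)).op σ = _
    rw [SSet.stdSimplex.map_apply, Equiv.apply_symm_apply, op_comp]
    exact FunctorToTypes.map_comp_apply Y _ _ σ

lemma objEquiv_vrt (k : ℕ) (i : Fin (k + 1)) :
    SSet.stdSimplex.objEquiv (vrt k i)
      = SimplexCategory.const (SimplexCategory.mk 0) (SimplexCategory.mk k) i := rfl

lemma mem_wideSub_iff {X : SSet.{0}} {ν : Set (X.obj V0)} {m : SimplexCategoryᵒᵖ}
    (p : (sprod J X).obj m) :
    p ∈ (wideSub X ν).carrier m ↔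
      ∀ g : SimplexCategory.mk 0 ⟶ m.unop,
        p.1 (g.toOrderHom 0) = true → X.map g.op p.2 ∈ ν := Iff.rfl

lemma mem_zeroSlice_iff {X : SSet.{0}} {m : SimplexCategoryᵒᵖ} (p : (sprod J X).obj m) :
    p ∈ (zeroSlice X).carrier m ↔
      ∀ g : SimplexCategory.mk 0 ⟶ m.unop, p.1 (g.toOrderHom 0) = false := Iff.rfl

/-- Transfer of the `zeroSlice` condition along a map of second components. -/
lemma zeroSlice_transfer {X X' : SSet.{0}} {m : SimplexCategoryᵒᵖ} {a : J.obj m}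
    {x : X.obj m} {x' : X'.obj m} (h : (a, x) ∈ (zeroSlice X).carrier m) :
    (a, x') ∈ (zeroSlice X').carrier m :=
  fun g => h g

/-- A vertex of a simplex of `Y` presented through `f : m ⟶ [k]` is a vertex of the
presenting `k`-simplex. -/
lemma vertex_comp {Y : SSet.{0}} {m : SimplexCategoryᵒᵖ} {k : ℕ}
    (f : m.unop ⟶ SimplexCategory.mk k) (σ : Y.obj (Opposite.op (SimplexCategory.mk k)))
    (g : SimplexCategory.mk 0 ⟶ m.unop) :
    Y.map g.op (Y.map f.op σ) = Y.map (g ≫ f).op σ := by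
  rw [op_comp, FunctorToTypes.map_comp_apply]


/-! ### Membership transfer lemmas -/

open SSet.stdSimplex in
lemma objEquiv_map {k : ℕ} {m : SimplexCategoryᵒᵖ} (g : SimplexCategory.mk 0 ⟶ m.unop)
    (x : Δ[k].obj m) :
    objEquiv (Δ[k].map g.op x) = g ≫ objEquiv x := by
  rw [SSet.stdSimplex.map_apply, Equiv.apply_symm_apply]
  rfl

open SSet.stdSimplex in
/-- Transfer of wideness along the Yoneda map of a simplex whose `i`-th vertex is `y`. -/
lemma wide_transfer {Y : SSet.{0}} {y : Y.obj V0} {k : ℕ} {m : SimplexCategoryᵒᵖ}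
    (σ : Y.obj (Opposite.op (SimplexCategory.mk k))) (i : Fin (k + 1))
    (hvi : Y.map (SimplexCategory.const (SimplexCategory.mk 0) (SimplexCategory.mk k) i).op σ
      = y)
    (p : (sprod J Δ[k]).obj m) (hp : p ∈ (wideSub Δ[k] {vrt k i}).carrier m) :
    (p.1, Y.map (objEquiv p.2).op σ) ∈ (wideSub Y {y}).carrier m := by
  intro g hg
  have h1 : Δ[k].map g.op p.2 ∈ ({vrt k i} : Set _) := hp g hg
  have h2 : g ≫ objEquiv p.2
      = SimplexCategory.const (SimplexCategory.mk 0) (SimplexCategory.mk k) i := by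
    rw [← objEquiv_map g p.2, Set.mem_singleton_iff.1 h1, objEquiv_vrt]
  show Y.map g.op (Y.map (objEquiv p.2).op σ) ∈ ({y} : Set _)
  rw [vertex_comp, h2, hvi]
  rfl

lemma mem_sk {Y : SSet.{0}} {k : ℕ} {m : SimplexCategoryᵒᵖ}
    (f : m.unop ⟶ SimplexCategory.mk k) (σ : Y.obj (Opposite.op (SimplexCategory.mk k))) :
    Y.map f.op σ ∈ (skSub Y k).carrier m :=
  ⟨k, le_rfl, f, σ, rfl⟩

lemma mem_sk_pred {Y : SSet.{0}} {k : ℕ} (hk : 1 ≤ k) {m : SimplexCategoryᵒᵖ}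
    (f : m.unop ⟶ SimplexCategory.mk k) (σ : Y.obj (Opposite.op (SimplexCategory.mk k)))
    (hns : ¬ Function.Surjective f.toOrderHom) :
    Y.map f.op σ ∈ (skSub Y (k - 1)).carrier m := by
  obtain ⟨j, e, i, hjk, hes, hei⟩ := factorSurj_lt f hns
  exact ⟨j, by omega, e, Y.map i.op σ,
    by rw [← FunctorToTypes.map_comp_apply, ← op_comp, hei]⟩

lemma not_mem_A {Y : SSet.{0}} {A : Sub Y} {k : ℕ} {m : SimplexCategoryᵒᵖ}
    (f : m.unop ⟶ SimplexCategory.mk k) (σ : Y.obj (Opposite.op (SimplexCategory.mk k)))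
    (hA : σ ∉ A.carrier (Opposite.op (SimplexCategory.mk k)))
    (hs : Function.Surjective f.toOrderHom) :
    Y.map f.op σ ∉ A.carrier m := by
  intro hmem
  obtain ⟨s, -, hsf, -, -⟩ := exists_sections f hs
  apply hA
  have : Y.map s.op (Y.map f.op σ) = σ := by
    rw [← FunctorToTypes.map_comp_apply, ← op_comp, hsf]
    simp
  rw [← this]
  exact A.map_mem s.op hmem

lemma not_mem_sk_pred {Y : SSet.{0}} {k : ℕ} (hk : 1 ≤ k) {m : SimplexCategoryᵒᵖ}
    (f : m.unop ⟶ SimplexCategory.mk k) (σ : Y.obj (Opposite.op (SimplexCategory.mk k)))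
    (hnd : Nondegenerate Y σ) (hs : Function.Surjective f.toOrderHom) :
    Y.map f.op σ ∉ (skSub Y (k - 1)).carrier m := by
  rintro ⟨j, hj, h, ρ, hρ⟩
  obtain ⟨s, -, hsf, -, -⟩ := exists_sections f hs
  have hσ : Y.map (s ≫ h).op ρ = σ := by
    rw [op_comp, FunctorToTypes.map_comp_apply, hρ, ← FunctorToTypes.map_comp_apply,
      ← op_comp, hsf]
    simp
  have := hnd j (s ≫ h) ρ hσ
  omega

open SSet.stdSimplex in
lemma vrt_not_surj {k : ℕ} (hk : 1 ≤ k) (i : Fin (k + 1)) :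
    vrt k i ∈ (bSub k).carrier V0 := by
  intro hs
  have := Fintype.card_le_of_surjective _ hs
  simp only [SimplexCategory.len_mk, Fintype.card_fin] at this
  omega

open SSet.stdSimplex in
lemma mem_widened_of_nonsurj {k : ℕ} (hk : 1 ≤ k) (i : Fin (k + 1)) {m : SimplexCategoryᵒᵖ}
    (p : (sprod J Δ[k]).obj m) (hp : p ∈ (wideSub Δ[k] {vrt k i}).carrier m)
    (hns : ¬ Function.Surjective (objEquiv p.2).toOrderHom) :
    p ∈ (widenedSub Δ[k] (bSub k) {vrt k i}).carrier m := by
  refine Or.inr ⟨?_, hns⟩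
  intro g hg
  refine ⟨hp g hg, ?_⟩
  have h1 : Δ[k].map g.op p.2 = vrt k i := hp g hg
  show Δ[k].map g.op p.2 ∈ (bSub k).carrier V0
  rw [h1]
  exact vrt_not_surj hk i

/-! ### The explicit coproducts and the comparison maps -/

section Main

variable (Y : SSet.{0}) (A : Sub Y) (y : Y.obj V0) (k : ℕ) (iσ : Nk Y A y k → Fin (k + 1))

/-- Explicit coproduct of the iso-horns indexed by `N_k`. -/
def sigA : SSet.{0} where
  obj m := Σ σ : Nk Y A y k, ((widenedSub Δ[k] (bSub k) {vrt k (iσ σ)}).toSSet).obj m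
  map φ := TypeCat.ofHom fun z => ⟨z.1, ((widenedSub Δ[k] (bSub k) {vrt k (iσ z.1)}).toSSet).map φ z.2⟩
  map_id m := by
    ext z : 3
    exact congrArg (Sigma.mk z.1) (FunctorToTypes.map_id_apply _ z.2)
  map_comp φ ψ := by
    ext z : 3
    exact congrArg (Sigma.mk z.1) (FunctorToTypes.map_comp_apply _ φ ψ z.2)

/-- Explicit coproduct of the isoplexes indexed by `N_k`. -/
def sigB : SSet.{0} where
  obj m := Σ σ : Nk Y A y k, ((wideSub Δ[k] {vrt k (iσ σ)}).toSSet).obj m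
  map φ := TypeCat.ofHom fun z => ⟨z.1, ((wideSub Δ[k] {vrt k (iσ z.1)}).toSSet).map φ z.2⟩
  map_id m := by
    ext z : 3
    exact congrArg (Sigma.mk z.1) (FunctorToTypes.map_id_apply _ z.2)
  map_comp φ ψ := by
    ext z : 3
    exact congrArg (Sigma.mk z.1) (FunctorToTypes.map_comp_apply _ φ ψ z.2)

/-- Coprojection into `sigA`. -/
def iotaA (σ : Nk Y A y k) :
    ((widenedSub Δ[k] (bSub k) {vrt k (iσ σ)}).toSSet) ⟶ sigA Y A y k iσ where
  app m := TypeCat.ofHom fun x => ⟨σ, x⟩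
  naturality _ _ _ := rfl

/-- Coprojection into `sigB`. -/
def iotaB (σ : Nk Y A y k) :
    ((wideSub Δ[k] {vrt k (iσ σ)}).toSSet) ⟶ sigB Y A y k iσ where
  app m := TypeCat.ofHom fun x => ⟨σ, x⟩
  naturality _ _ _ := rfl

/-- The coproduct of the iso-horn inclusions, on the explicit coproducts. -/
def sigHat : sigA Y A y k iσ ⟶ sigB Y A y k iσ where
  app m := TypeCat.ofHom fun z => ⟨z.1, (isoHornIncl k (iσ z.1)).app m z.2⟩
  naturality _ _ _ := rfl

end Main


section Main2

variable (Y : SSet.{0}) (A : Sub Y) (y : Y.obj V0) (k : ℕ) (iσ : Nk Y A y k → Fin (k + 1))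

open SSet.stdSimplex

lemma top_mem (hk : 1 ≤ k) (σ : Nk Y A y k)
    (hvi : Y.map (SimplexCategory.const (SimplexCategory.mk 0) (SimplexCategory.mk k)
      (iσ σ)).op σ.1 = y)
    {m : SimplexCategoryᵒᵖ} (p : (sprod J Δ[k]).obj m)
    (hp : p ∈ (widenedSub Δ[k] (bSub k) {vrt k (iσ σ)}).carrier m) :
    (p.1, Y.map (objEquiv p.2).op σ.1) ∈ (filtSub Y A y (k - 1)).carrier m := by
  rcases hp with h | ⟨hw, hb⟩
  · exact Or.inl (Or.inl (zeroSlice_transfer h))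
  · exact Or.inr ⟨wide_transfer σ.1 (iσ σ) hvi p
      ((wideSub_mono Δ[k] Set.inter_subset_left) m hw),
      mem_sk_pred hk _ σ.1 hb⟩

lemma bot_mem (σ : Nk Y A y k)
    (hvi : Y.map (SimplexCategory.const (SimplexCategory.mk 0) (SimplexCategory.mk k)
      (iσ σ)).op σ.1 = y)
    {m : SimplexCategoryᵒᵖ} (p : (sprod J Δ[k]).obj m)
    (hp : p ∈ (wideSub Δ[k] {vrt k (iσ σ)}).carrier m) :
    (p.1, Y.map (objEquiv p.2).op σ.1) ∈ (filtSub Y A y k).carrier m :=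
  Or.inr ⟨wide_transfer σ.1 (iσ σ) hvi p hp, mem_sk _ σ.1⟩

variable (hk : 1 ≤ k)
  (hiσ : ∀ σ : Nk Y A y k,
    Y.map (SimplexCategory.const (SimplexCategory.mk 0) (SimplexCategory.mk k)
      (iσ σ)).op σ.1 = y)

/-- The top comparison map. -/
def topHat : sigA Y A y k iσ ⟶ (filtSub Y A y (k - 1)).toSSet where
  app m := TypeCat.ofHom fun z => ⟨(z.2.1.1, Y.map (objEquiv z.2.1.2).op z.1.1),
    top_mem Y A y k iσ hk z.1 (hiσ z.1) z.2.1 z.2.2⟩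
  naturality m m' φ := by
    ext z : 3
    apply Subtype.ext
    apply Prod.ext
    · rfl
    · exact ConcreteCategory.congr_hom ((yonY Y z.1.1).naturality φ) z.2.1.2

/-- The bottom comparison map. -/
def botHat : sigB Y A y k iσ ⟶ (filtSub Y A y k).toSSet where
  app m := TypeCat.ofHom fun z => ⟨(z.2.1.1, Y.map (objEquiv z.2.1.2).op z.1.1),
    bot_mem Y A y k iσ z.1 (hiσ z.1) z.2.1 z.2.2⟩
  naturality m m' φ := by
    ext z : 3
    apply Subtype.ext
    apply Prod.ext
    · rfl
    · exact ConcreteCategory.congr_hom ((yonY Y z.1.1).naturality φ) z.2.1.2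

lemma filt_le : (filtSub Y A y (k - 1)).Le (filtSub Y A y k) := by
  rintro m p (h | ⟨hw, j, hj, f, ρ, hρ⟩)
  · exact Or.inl h
  · exact Or.inr ⟨hw, j, by omega, f, ρ, hρ⟩

lemma comm_hat :
    topHat Y A y k iσ hk hiσ ≫ Sub.homOfLe (filt_le Y A y k) =
      sigHat Y A y k iσ ≫ botHat Y A y k iσ hiσ := rfl

end Main2


section Main3

variable (Y : SSet.{0}) (A : Sub Y) (y : Y.obj V0) (k : ℕ) (iσ : Nk Y A y k → Fin (k + 1))
  (hy : Narrow Y y) (hk : 1 ≤ k)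
  (hiσ : ∀ σ : Nk Y A y k,
    Y.map (SimplexCategory.const (SimplexCategory.mk 0) (SimplexCategory.mk k)
      (iσ σ)).op σ.1 = y)

open SSet.stdSimplex

lemma level_inj (m : SimplexCategoryᵒᵖ) :
    Function.Injective ((Sub.homOfLe (filt_le Y A y k)).app m) := by
  intro p q h
  apply Subtype.ext
  have h' := congrArg Subtype.val h
  exact h'

include hy hk hiσ in
lemma level_surj (m : SimplexCategoryᵒᵖ) :
    ∀ d : ((filtSub Y A y k).toSSet).obj m,
      (∃ x, (Sub.homOfLe (filt_le Y A y k)).app m x = d) ∨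
        (∃ c, (botHat Y A y k iσ hiσ).app m c = d) := by
  rintro ⟨⟨a, τ⟩, hd⟩
  by_cases h0 : ((a, τ) : (sprod J Y).obj m) ∈ (filtSub Y A y (k - 1)).carrier m
  · exact Or.inl ⟨⟨(a, τ), h0⟩, Subtype.ext rfl⟩
  right
  rcases hd with (hz | hA) | ⟨hw, hsk⟩
  · exact absurd (Or.inl (Or.inl hz)) h0
  · exact absurd (Or.inl (Or.inr hA)) h0
  have hnsk' : τ ∉ (skSub Y (k - 1)).carrier m := fun hc => h0 (Or.inr ⟨hw, hc⟩)
  obtain ⟨f, σ, hfs, hnd, hfτ⟩ := ez_exists hk τ hsk hnsk'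
  have hnA : σ ∉ A.carrier _ := by
    intro hc
    refine h0 (Or.inl (Or.inr ⟨hw, ?_⟩))
    show τ ∈ A.carrier m
    rw [← hfτ]
    exact A.map_mem f.op hc
  have hnz : ¬ ∀ g : SimplexCategory.mk 0 ⟶ m.unop, a (g.toOrderHom 0) = false :=
    fun hc => h0 (Or.inl (Or.inl (fun g => hc g)))
  push_neg at hnz
  obtain ⟨g₀, hg₀⟩ := hnz
  have hg₀t : a (g₀.toOrderHom 0) = true := by simpa using hg₀
  have hvert : Y.map (g₀ ≫ f).op σ = y := by
    have h1 : Y.map g₀.op τ ∈ ({y} : Set _) := hw g₀ hg₀t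
    rw [← hfτ, vertex_comp] at h1
    exact h1
  set σn : Nk Y A y k := ⟨σ, hnd, hnA, g₀ ≫ f, hvert⟩ with hσn
  have hwideΔ : ((a, objEquiv.symm f) : (sprod J Δ[k]).obj m)
      ∈ (wideSub Δ[k] {vrt k (iσ σn)}).carrier m := by
    intro g hg
    have hv : Y.map (g ≫ f).op σ = y := by
      have h1 : Y.map g.op τ ∈ ({y} : Set _) := hw g hg
      rw [← hfτ, vertex_comp] at h1
      exact h1
    have hconst : g ≫ f = SimplexCategory.const (SimplexCategory.mk 0)
        (SimplexCategory.mk k) (iσ σn) :=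
      hy σ (g ≫ f) _ hv (hiσ σn)
    show Δ[k].map g.op (objEquiv.symm f) ∈ ({vrt k (iσ σn)} : Set _)
    have heq : Δ[k].map g.op (objEquiv.symm f) = vrt k (iσ σn) := by
      apply objEquiv.injective
      rw [objEquiv_map, Equiv.apply_symm_apply, objEquiv_vrt, hconst]
    exact heq
  refine ⟨⟨σn, ⟨(a, objEquiv.symm f), hwideΔ⟩⟩, ?_⟩
  apply Subtype.ext
  show ((a, Y.map ((objEquiv.{0}) ((objEquiv.{0}).symm f)).op σ) : (sprod J Y).obj m)
    = (a, τ)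
  rw [Equiv.apply_symm_apply, hfτ]

include hk in
lemma level_h5 (m : SimplexCategoryᵒᵖ) :
    ∀ (c : (sigB Y A y k iσ).obj m) (x : ((filtSub Y A y (k - 1)).toSSet).obj m),
      (botHat Y A y k iσ hiσ).app m c = (Sub.homOfLe (filt_le Y A y k)).app m x →
        ∃ zA : (sigA Y A y k iσ).obj m, (sigHat Y A y k iσ).app m zA = c := by
  rintro ⟨σn, ⟨⟨a, xd⟩, hwd⟩⟩ x hcx
  have hval : ((a, Y.map (objEquiv xd).op σn.1) : (sprod J Y).obj m)
      ∈ (filtSub Y A y (k - 1)).carrier m := by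
    have h1 := congrArg Subtype.val hcx
    rw [show ((a, Y.map (objEquiv xd).op σn.1) : (sprod J Y).obj m) = x.1 from h1]
    exact x.2
  suffices hmem : ((a, xd) : (sprod J Δ[k]).obj m)
      ∈ (widenedSub Δ[k] (bSub k) {vrt k (iσ σn)}).carrier m by
    exact ⟨⟨σn, ⟨(a, xd), hmem⟩⟩, rfl⟩
  by_cases hsurjf : Function.Surjective (objEquiv xd).toOrderHom
  · rcases hval with (hz | hA) | ⟨-, hskm⟩
    · exact Or.inl (zeroSlice_transfer hz)
    · exact absurd hA.2 (not_mem_A _ σn.1 σn.2.2.1 hsurjf)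
    · exact absurd hskm (not_mem_sk_pred hk _ σn.1 σn.2.1 hsurjf)
  · exact mem_widened_of_nonsurj hk (iσ σn) (a, xd) hwd hsurjf

include hk in
lemma level_h6 (m : SimplexCategoryᵒᵖ) :
    ∀ c c' : (sigB Y A y k iσ).obj m,
      (botHat Y A y k iσ hiσ).app m c = (botHat Y A y k iσ hiσ).app m c' →
        c = c' ∨ ∃ zA : (sigA Y A y k iσ).obj m, (sigHat Y A y k iσ).app m zA = c := by
  rintro ⟨⟨σ, hσp⟩, ⟨⟨a, xd⟩, hwd⟩⟩ ⟨⟨σ', hσp'⟩, ⟨⟨a', xd'⟩, hwd'⟩⟩ heq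
  have hval := congrArg Subtype.val heq
  have ha : a = a' := congrArg Prod.fst hval
  have hτ : Y.map (objEquiv xd).op σ = Y.map (objEquiv xd').op σ' :=
    congrArg Prod.snd hval
  by_cases hsf : Function.Surjective (objEquiv xd).toOrderHom
  · by_cases hsf' : Function.Surjective (objEquiv xd').toOrderHom
    · obtain ⟨hfeq, hσeq⟩ := ez_unique _ _ σ σ' hsf hsf' hσp.1 hσp'.1 hτ
      left
      subst ha
      cases hσeq
      have hxd : xd = xd' := objEquiv.injective hfeq
      cases hxd
      rfl
    · exfalso
      apply not_mem_sk_pred hk _ σ hσp.1 hsf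
      rw [hτ]
      exact mem_sk_pred hk _ σ' hsf'
  · exact Or.inr ⟨⟨⟨σ, hσp⟩, ⟨(a, xd),
      mem_widened_of_nonsurj hk _ (a, xd) hwd hsf⟩⟩, rfl⟩

end Main3


section Main4

variable (Y : SSet.{0}) (A : Sub Y) (y : Y.obj V0) (k : ℕ) (iσ : Nk Y A y k → Fin (k + 1))
  (hy : Narrow Y y) (hk : 1 ≤ k)
  (hiσ : ∀ σ : Nk Y A y k,
    Y.map (SimplexCategory.const (SimplexCategory.mk 0) (SimplexCategory.mk k)
      (iσ σ)).op σ.1 = y)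

/-- The level-wise pushout square. -/
noncomputable def levelColim (m : SimplexCategoryᵒᵖ) :
    IsColimit (PushoutCocone.mk ((Sub.homOfLe (filt_le Y A y k)).app m)
      ((botHat Y A y k iσ hiσ).app m)
      (congrArg (fun η => η.app m) (comm_hat Y A y k iσ hk hiσ))) :=
  typesPushout ((topHat Y A y k iσ hk hiσ).app m) ((sigHat Y A y k iσ).app m)
    ((Sub.homOfLe (filt_le Y A y k)).app m) ((botHat Y A y k iσ hiσ).app m)
    (congrArg (fun η => η.app m) (comm_hat Y A y k iσ hk hiσ))
    (level_inj Y A y k m)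
    (level_surj Y A y k iσ hy hk hiσ m)
    (level_h5 Y A y k iσ hk hiσ m)
    (level_h6 Y A y k iσ hk hiσ m)

/-- The pushout square of `sigA`, `sigB` and the filtration subcomplexes. -/
noncomputable def hatIsPushout :
    IsPushout (topHat Y A y k iσ hk hiσ) (sigHat Y A y k iσ)
      (Sub.homOfLe (filt_le Y A y k)) (botHat Y A y k iσ hiσ) := by
  apply IsPushout.of_isColimit
    (c := PushoutCocone.mk (Sub.homOfLe (filt_le Y A y k)) (botHat Y A y k iσ hiσ)
      (comm_hat Y A y k iσ hk hiσ))
  apply evaluationJointlyReflectsColimits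
  intro m
  exact (isColimitMapCoconePushoutCoconeEquiv ((evaluation SimplexCategoryᵒᵖ (Type 0)).obj m)
    (comm_hat Y A y k iσ hk hiσ)).symm (levelColim Y A y k iσ hy hk hiσ m)

end Main4


section Main5

variable (Y : SSet.{0}) (A : Sub Y) (y : Y.obj V0) (k : ℕ) (iσ : Nk Y A y k → Fin (k + 1))

/-- The inverse comparison map from the explicit coproduct `sigA` to `∐`. -/
noncomputable def invA :
    sigA Y A y k iσ ⟶ (∐ fun σ : Nk Y A y k => (widenedSub Δ[k] (bSub k) {vrt k (iσ σ)}).toSSet)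
    where
  app m := TypeCat.ofHom fun z => (Sigma.ι (fun σ : Nk Y A y k =>
    (widenedSub Δ[k] (bSub k) {vrt k (iσ σ)}).toSSet) z.1).app m z.2
  naturality m m' φ := by
    ext z : 3
    exact ConcreteCategory.congr_hom ((Sigma.ι (fun σ : Nk Y A y k =>
      (widenedSub Δ[k] (bSub k) {vrt k (iσ σ)}).toSSet) z.1).naturality φ) z.2

/-- The inverse comparison map from the explicit coproduct `sigB` to `∐`. -/
noncomputable def invB :
    sigB Y A y k iσ ⟶ (∐ fun σ : Nk Y A y k => (wideSub Δ[k] {vrt k (iσ σ)}).toSSet) where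
  app m := TypeCat.ofHom fun z => (Sigma.ι (fun σ : Nk Y A y k =>
    (wideSub Δ[k] {vrt k (iσ σ)}).toSSet) z.1).app m z.2
  naturality m m' φ := by
    ext z : 3
    exact ConcreteCategory.congr_hom ((Sigma.ι (fun σ : Nk Y A y k =>
      (wideSub Δ[k] {vrt k (iσ σ)}).toSSet) z.1).naturality φ) z.2

noncomputable def isoA :
    (∐ fun σ : Nk Y A y k => (widenedSub Δ[k] (bSub k) {vrt k (iσ σ)}).toSSet) ≅
      sigA Y A y k iσ where
  hom := Sigma.desc (iotaA Y A y k iσ)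
  inv := invA Y A y k iσ
  hom_inv_id := by
    apply Sigma.hom_ext
    intro σ
    rw [← Category.assoc, colimit.ι_desc, Category.comp_id]
    rfl
  inv_hom_id := by
    apply SSet.hom_ext
    intro m
    ext z : 3
    have h := types_congr_hom (congrArg (fun η => η.app m)
      (colimit.ι_desc (Cofan.mk (sigA Y A y k iσ) (iotaA Y A y k iσ)) ⟨z.1⟩)) z.2
    exact h

noncomputable def isoB :
    (∐ fun σ : Nk Y A y k => (wideSub Δ[k] {vrt k (iσ σ)}).toSSet) ≅ sigB Y A y k iσ where
  hom := Sigma.desc (iotaB Y A y k iσ)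
  inv := invB Y A y k iσ
  hom_inv_id := by
    apply Sigma.hom_ext
    intro σ
    rw [← Category.assoc, colimit.ι_desc, Category.comp_id]
    rfl
  inv_hom_id := by
    apply SSet.hom_ext
    intro m
    ext z : 3
    have h := types_congr_hom (congrArg (fun η => η.app m)
      (colimit.ι_desc (Cofan.mk (sigB Y A y k iσ) (iotaB Y A y k iσ)) ⟨z.1⟩)) z.2
    exact h

lemma iso_sq :
    (isoA Y A y k iσ).hom ≫ sigHat Y A y k iσ =
      (Limits.Sigma.map fun σ : Nk Y A y k => isoHornIncl k (iσ σ)) ≫ (isoB Y A y k iσ).hom := by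
  apply Sigma.hom_ext
  intro σ
  rw [← Category.assoc, ← Category.assoc]
  show (Sigma.ι _ σ ≫ Sigma.desc (iotaA Y A y k iσ)) ≫ sigHat Y A y k iσ = _
  rw [colimit.ι_desc]
  show iotaA Y A y k iσ σ ≫ sigHat Y A y k iσ = _
  rw [Sigma.ι_map]
  simp only [isoB]
  rw [Category.assoc, colimit.ι_desc]
  rfl

end Main5

/-- Let `X ⊆ Y` be an inclusion of simplicial sets, `y` a vertex of `X`
which is narrow in `Y`, and `k ≥ 1`. For each `σ` in `N_k` let `i_σ` be the (unique)
index such that the `i_σ`-th vertex of `σ` is `y`. Then the inclusion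
`Y ∪ W_y(X) ∪ W_y(sk_{k−1} Y) ↪ Y ∪ W_y(X) ∪ W_y(sk_k Y)` is a pushout of the coproduct
over `σ ∈ N_k` of the iso-horn inclusions `𝕍_{i_σ}[k+1] ↪ ∇̄_{i_σ}[k+1]`. -/
theorem filtSub_isPushout_of_isoHorns (Y : SSet.{0}) (A : Sub Y) (y : Y.obj V0)
    (hyA : y ∈ A.carrier V0) (hy : Narrow Y y) (k : ℕ) (hk : 1 ≤ k)
    (iσ : Nk Y A y k → Fin (k + 1))
    (hiσ : ∀ σ : Nk Y A y k,
      Y.map (SimplexCategory.const (SimplexCategory.mk 0) (SimplexCategory.mk k)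
        (iσ σ)).op σ.1 = y) :
    ∃ (hle : (filtSub Y A y (k - 1)).Le (filtSub Y A y k))
      (top : (∐ fun σ : Nk Y A y k => (widenedSub Δ[k] (bSub k) {vrt k (iσ σ)}).toSSet) ⟶
        (filtSub Y A y (k - 1)).toSSet)
      (bot : (∐ fun σ : Nk Y A y k => (wideSub Δ[k] {vrt k (iσ σ)}).toSSet) ⟶
        (filtSub Y A y k).toSSet),
      IsPushout top (Limits.Sigma.map fun σ : Nk Y A y k => isoHornIncl k (iσ σ))
        (Sub.homOfLe hle) bot := by
  refine ⟨filt_le Y A y k, (isoA Y A y k iσ).hom ≫ topHat Y A y k iσ hk hiσ,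
    (isoB Y A y k iσ).hom ≫ botHat Y A y k iσ hiσ, ?_⟩
  have sq1 : IsPushout (isoA Y A y k iσ).hom
      (Limits.Sigma.map fun σ : Nk Y A y k => isoHornIncl k (iσ σ))
      (sigHat Y A y k iσ) (isoB Y A y k iσ).hom :=
    IsPushout.of_horiz_isIso ⟨iso_sq Y A y k iσ⟩
  exact sq1.paste_horiz (hatIsPushout Y A y k iσ hy hk hiσ)

end Paper
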